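/- (Decoupling of tree OT at a constrained interior node) Let K factor over a tree 𝒯 = (𝒱, ℰ) as K_{i_1,…,i_J} = Π_{(j_1,j_2)∈ℰ} K^{(j_1,j_2)}_{i_{j_1},i_{j_2}} with strictly positive edge matrices, and let k ∈ 𝒱 be a non-leaf node. Removing k splits 𝒯 into subtrees 𝒯_1, …, 𝒯_d (each together with k). Then for any strictly positive vectors u_1,…,u_J and M = K ⊙ (u_1 ⊗ ⋯ ⊗ u_J), the conditional tensor factorizes across the subtrees: for every fixed index i_k, M restricted to marginal-index i_k equals (P_k(M)_{i_k})^{1−d} times the product over the subtrees of the corresponding restricted projections, i.e., the variables in different subtrees 𝒯_m are conditionally independent given the index i_k. -/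

import Mathlib

open Finset

/-- Constrained sum of a product of block-local functions factorizes. -/
lemma constrained_sum_prod_aux {n J d : ℕ} (i : Fin J → Fin n)
    (V : Fin d → Finset (Fin J)) (k : Fin J)
    (hVk : ∀ m, k ∉ V m)
    (hVdisj : ∀ m m', m ≠ m' → Disjoint (V m) (V m'))
    (f : Fin d → (Fin J → Fin n) → ℝ)
    (hdep : ∀ m (i₁ i₂ : Fin J → Fin n),
      (∀ j, j = k ∨ j ∈ V m → i₁ j = i₂ j) → f m i₁ = f m i₂)
    (T : Finset (Fin d)) :
    ∑ i' ∈ univ.filter (fun i' : Fin J → Fin n => ∀ j, j ∉ T.biUnion V → i' j = i j),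
        ∏ m ∈ T, f m i'
      = ∏ m ∈ T, ∑ i' ∈ univ.filter
          (fun i' : Fin J → Fin n => ∀ j, j ∉ V m → i' j = i j), f m i' := by
  classical
  induction T using Finset.induction with
  | empty =>
    have hset : univ.filter
        (fun i' : Fin J → Fin n => ∀ j, j ∉ (∅ : Finset (Fin d)).biUnion V → i' j = i j)
        = {i} := by
      ext i'
      simp only [mem_filter, mem_univ, true_and, mem_singleton, Finset.biUnion_empty,
        Finset.notMem_empty, not_false_iff, forall_true_left]
      constructor
      · intro h; funext j; exact h j
      · intro h j; rw [h]
    rw [hset]; simp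
  | @insert a T ha IH =>
    have hWU : Disjoint (V a) (T.biUnion V) := by
      rw [Finset.disjoint_biUnion_right]
      intro m hm
      exact hVdisj a m (fun h => ha (h ▸ hm))
    set W := V a with hW
    set U := T.biUnion V with hU
    have hbU : (insert a T).biUnion V = W ∪ U := by
      rw [Finset.biUnion_insert]
    have hkW : k ∉ W := hVk a
    have hkU : k ∉ U := by
      rw [hU, Finset.mem_biUnion]
      rintro ⟨m, _, hkm⟩
      exact hVk m hkm
    have hkWU : k ∉ (insert a T).biUnion V := by
      rw [hbU, Finset.mem_union]; tauto
    rw [Finset.prod_insert ha, ← IH]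
    rw [Finset.sum_mul_sum]
    rw [← Finset.sum_product']
    refine Finset.sum_bij'
      (fun i' _ => ((fun j => if j ∈ W then i' j else i j),
                    (fun j => if j ∈ U then i' j else i j)))
      (fun p _ => (fun j => if j ∈ W then p.1 j else p.2 j)) ?_ ?_ ?_ ?_ ?_
    · intro i' hi'
      simp only [mem_filter, mem_univ, true_and] at hi'
      simp only [Finset.mem_product, mem_filter, mem_univ, true_and]
      constructor
      · intro j hj; simp [hj, hW]
      · intro j hj; simp [hj]
    · intro p hp
      simp only [Finset.mem_product, mem_filter, mem_univ, true_and] at hp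
      simp only [mem_filter, mem_univ, true_and]
      intro j hj
      rw [hbU, Finset.mem_union] at hj
      push_neg at hj
      simp only [hj.1, if_false]
      exact hp.2 j hj.2
    · intro i' hi'
      simp only [mem_filter, mem_univ, true_and] at hi'
      funext j
      by_cases hjW : j ∈ W
      · simp [hjW]
      · simp only [hjW, if_false]
        by_cases hjU : j ∈ U
        · simp [hjU]
        · simp only [hjU, if_false]
          exact (hi' j (by rw [hbU, Finset.mem_union]; tauto)).symm
    · intro p hp
      simp only [Finset.mem_product, mem_filter, mem_univ, true_and] at hp
      refine Prod.ext ?_ ?_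
      · funext j
        by_cases hjW : j ∈ W
        · simp [hjW]
        · simp only [hjW, if_false]
          exact (hp.1 j hjW).symm
      · funext j
        by_cases hjU : j ∈ U
        · have hjW : j ∉ W := fun h => Finset.disjoint_left.1 hWU h hjU
          simp [hjU, hjW]
        · simp only [hjU, if_false]
          exact (hp.2 j hjU).symm
    · intro i' hi'
      simp only [mem_filter, mem_univ, true_and] at hi'
      rw [Finset.prod_insert ha]
      congr 1
      · apply hdep
        intro j hj
        rcases hj with hj | hj
        · subst hj
          simp only [hkW, if_false]
          exact hi' _ hkWU
        · have : j ∈ W := hW ▸ hj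
          simp [this]
      · apply Finset.prod_congr rfl
        intro m hm
        apply hdep
        intro j hj
        rcases hj with hj | hj
        · subst hj
          simp only [hkU, if_false]
          exact hi' _ hkWU
        · have hjU : j ∈ U := by
            rw [hU]; exact Finset.mem_biUnion.2 ⟨m, hm, hj⟩
          simp [hjU]

/-- Decoupling of a tree-structured tensor at an interior node `k`: if removing `k` splits
the tree into subtrees with vertex sets `V 1, …, V d`, then the variables in different
subtrees are conditionally independent given the index at `k`:
`M(i) · (P_k(M)_{i_k})^{d-1} = Π_m P_{V_m ∪ {k}}(M)(i)`. -/
theorem tree_decoupling_at_interior_node {n J d : ℕ}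
    (E : Finset (Fin J × Fin J)) (G : SimpleGraph (Fin J)) [DecidableRel G.Adj]
    (hG : ∀ a b, G.Adj a b ↔ ((a, b) ∈ E ∨ (b, a) ∈ E))
    (htree : G.IsTree)
    (K : Fin J → Fin J → Matrix (Fin n) (Fin n) ℝ)
    (hpos : ∀ p ∈ E, ∀ x y, 0 < K p.1 p.2 x y)
    (u : Fin J → Fin n → ℝ) (hu : ∀ j x, 0 < u j x)
    (k : Fin J) (hk : 2 ≤ (G.neighborFinset k).card)
    (V : Fin d → Finset (Fin J))
    (hVk : ∀ m, k ∉ V m)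
    (hVcover : ∀ x : Fin J, x ≠ k → ∃ m, x ∈ V m)
    (hVdisj : ∀ m m', m ≠ m' → Disjoint (V m) (V m'))
    (hEdge : ∀ e ∈ E, ∃ m, (e.1 ∈ V m ∨ e.1 = k) ∧ (e.2 ∈ V m ∨ e.2 = k))
    (M : (Fin J → Fin n) → ℝ)
    (hM : ∀ i, M i = (∏ e ∈ E, K e.1 e.2 (i e.1) (i e.2)) * ∏ j, u j (i j))
    (i : Fin J → Fin n) :
    M i * (∑ i' : Fin J → Fin n, if i' k = i k then M i' else 0) ^ (d - 1)
      = ∏ m, (∑ i' : Fin J → Fin n,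
          if ∀ s ∈ insert k (V m), i' s = i s then M i' else 0) := by
  classical
  -- d ≥ 1
  have hd : 0 < d := by
    have h2 : 0 < (G.neighborFinset k).card := lt_of_lt_of_le two_pos hk
    obtain ⟨b, hb⟩ := Finset.card_pos.1 h2
    rw [SimpleGraph.mem_neighborFinset] at hb
    obtain ⟨m, _⟩ := hVcover b (G.ne_of_adj hb).symm
    exact Fin.pos_iff_nonempty.2 ⟨m⟩
  -- edge blocks
  set Em : Fin d → Finset (Fin J × Fin J) := fun m =>
    E.filter (fun e => (e.1 ∈ V m ∨ e.1 = k) ∧ (e.2 ∈ V m ∨ e.2 = k)) with hEmdef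
  have hEpart : E = Finset.univ.biUnion Em := by
    ext e
    simp only [Finset.mem_biUnion, mem_univ, true_and, hEmdef, mem_filter]
    constructor
    · intro he; obtain ⟨m, hm⟩ := hEdge e he; exact ⟨m, he, hm⟩
    · rintro ⟨m, he, _⟩; exact he
  have hEdisj : Set.PairwiseDisjoint (↑(Finset.univ : Finset (Fin d))) Em := by
    intro m _ m' _ hmm'
    simp only [Function.onFun]
    rw [Finset.disjoint_left]
    intro e hem hem'
    simp only [hEmdef, mem_filter] at hem hem'
    have hne : ¬(e.1 = k ∧ e.2 = k) := by
      rintro ⟨h1, h2⟩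
      have := (hG e.1 e.2).2 (Or.inl hem.1)
      rw [h1, h2] at this
      exact G.irrefl this
    rcases hem.2.1 with h1 | h1
    · rcases hem'.2.1 with h1' | h1'
      · exact Finset.disjoint_left.1 (hVdisj m m' hmm') h1 h1'
      · exact hVk m (h1' ▸ h1)
    · rcases hem'.2.1 with h1' | h1'
      · exact hVk m' (h1 ▸ h1')
      · rcases hem.2.2 with h2 | h2
        · rcases hem'.2.2 with h2' | h2'
          · exact Finset.disjoint_left.1 (hVdisj m m' hmm') h2 h2'
          · exact hVk m (h2' ▸ h2)
        · exact hne ⟨h1, h2⟩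
  have hVdisj' : Set.PairwiseDisjoint (↑(Finset.univ : Finset (Fin d))) V := by
    intro m _ m' _ hmm'
    simp only [Function.onFun]
    exact hVdisj m m' hmm'
  -- block-local factors
  set f : Fin d → (Fin J → Fin n) → ℝ := fun m i' =>
    (∏ e ∈ Em m, K e.1 e.2 (i' e.1) (i' e.2)) * ∏ j ∈ V m, u j (i' j) with hfdef
  have hMfac : ∀ i' : Fin J → Fin n, M i' = u k (i' k) * ∏ m, f m i' := by
    intro i'
    rw [hM]
    have hvert : (Finset.univ : Finset (Fin J)).erase k = Finset.univ.biUnion V := by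
      ext j
      simp only [Finset.mem_erase, mem_univ, and_true, Finset.mem_biUnion, true_and]
      constructor
      · intro hj; exact hVcover j hj
      · rintro ⟨m, hm⟩; exact fun h => hVk m (h ▸ hm)
    have h1 : ∏ e ∈ E, K e.1 e.2 (i' e.1) (i' e.2)
        = ∏ m, ∏ e ∈ Em m, K e.1 e.2 (i' e.1) (i' e.2) := by
      conv_lhs => rw [hEpart]
      exact Finset.prod_biUnion hEdisj
    have h2 : ∏ j, u j (i' j) = u k (i' k) * ∏ m, ∏ j ∈ V m, u j (i' j) := by
      rw [← Finset.mul_prod_erase Finset.univ _ (Finset.mem_univ k), hvert,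
        Finset.prod_biUnion hVdisj']
    rw [h1, h2, hfdef]
    rw [Finset.prod_mul_distrib]
    ring
  have hdep : ∀ m (i₁ i₂ : Fin J → Fin n),
      (∀ j, j = k ∨ j ∈ V m → i₁ j = i₂ j) → f m i₁ = f m i₂ := by
    intro m i₁ i₂ hagree
    simp only [hfdef]
    congr 1
    · apply Finset.prod_congr rfl
      intro e he
      simp only [hEmdef, mem_filter] at he
      rw [hagree e.1 he.2.1.symm, hagree e.2 he.2.2.symm]
    · exact Finset.prod_congr rfl (fun j hj => by rw [hagree j (Or.inr hj)])
  -- partial sums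
  set σ : Fin d → ℝ := fun m =>
    ∑ i' ∈ univ.filter (fun i' : Fin J → Fin n => ∀ j, j ∉ V m → i' j = i j), f m i'
    with hσdef
  have hfpos : ∀ m (i' : Fin J → Fin n), 0 < f m i' := by
    intro m i'
    apply mul_pos
    · apply Finset.prod_pos
      intro e he
      simp only [hEmdef, mem_filter] at he
      exact hpos e he.1 _ _
    · exact Finset.prod_pos (fun j _ => hu j _)
  have hσpos : ∀ m, 0 < σ m := by
    intro m
    apply Finset.sum_pos (fun i' _ => hfpos m i')
    exact ⟨i, by simp⟩
  have hkbU : k ∉ (Finset.univ : Finset (Fin d)).biUnion V := by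
    rw [Finset.mem_biUnion]
    rintro ⟨m, _, hm⟩
    exact hVk m hm
  -- the k-marginal
  have hPk : (∑ i' : Fin J → Fin n, if i' k = i k then M i' else 0)
      = u k (i k) * ∏ m, σ m := by
    rw [← Finset.sum_filter]
    have hfilt : univ.filter (fun i' : Fin J → Fin n => i' k = i k)
        = univ.filter (fun i' : Fin J → Fin n =>
            ∀ j, j ∉ (Finset.univ : Finset (Fin d)).biUnion V → i' j = i j) := by
      apply Finset.filter_congr
      intro i' _
      constructor
      · intro h j hj
        by_cases hjk : j = k
        · rw [hjk]; exact h
        · exfalso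
          obtain ⟨m, hm⟩ := hVcover j hjk
          exact hj (Finset.mem_biUnion.2 ⟨m, mem_univ m, hm⟩)
      · intro h; exact h k hkbU
    rw [hfilt]
    rw [Finset.sum_congr rfl (fun i' hi' => by
      simp only [mem_filter, mem_univ, true_and] at hi'
      rw [hMfac i', hi' k hkbU])]
    rw [← Finset.mul_sum]
    congr 1
    exact constrained_sum_prod_aux i V k hVk hVdisj f hdep Finset.univ
  -- the subtree marginals
  have hQ : ∀ m, (∑ i' : Fin J → Fin n, if ∀ s ∈ insert k (V m), i' s = i s then M i' else 0)
      = u k (i k) * f m i * ∏ m' ∈ Finset.univ.erase m, σ m' := by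
    intro m
    have hset : ∀ j : Fin J,
        (j ∉ (Finset.univ.erase m).biUnion V) ↔ (j = k ∨ j ∈ V m) := by
      intro j
      constructor
      · intro hj
        by_cases hjk : j = k
        · exact Or.inl hjk
        · obtain ⟨m', hm'⟩ := hVcover j hjk
          by_cases hm'm : m' = m
          · exact Or.inr (hm'm ▸ hm')
          · exact absurd (Finset.mem_biUnion.2
              ⟨m', Finset.mem_erase.2 ⟨hm'm, mem_univ m'⟩, hm'⟩) hj
      · rintro (rfl | hjm)
        · rw [Finset.mem_biUnion]
          rintro ⟨m', _, hm'⟩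
          exact hVk m' hm'
        · rw [Finset.mem_biUnion]
          rintro ⟨m', hm'e, hm'⟩
          exact Finset.disjoint_left.1
            (hVdisj m m' (fun h => (Finset.mem_erase.1 hm'e).1 h.symm)) hjm hm'
    rw [← Finset.sum_filter]
    have hfilt : univ.filter (fun i' : Fin J → Fin n => ∀ s ∈ insert k (V m), i' s = i s)
        = univ.filter (fun i' : Fin J → Fin n =>
            ∀ j, j ∉ (Finset.univ.erase m).biUnion V → i' j = i j) := by
      apply Finset.filter_congr
      intro i' _
      simp only [Finset.mem_insert]
      constructor
      · intro h j hj
        rcases (hset j).1 hj with rfl | hjm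
        · exact h _ (Or.inl rfl)
        · exact h _ (Or.inr hjm)
      · intro h s hs
        exact h s ((hset s).2 hs)
    rw [hfilt]
    have hval : ∀ i' ∈ univ.filter (fun i' : Fin J → Fin n =>
        ∀ j, j ∉ (Finset.univ.erase m).biUnion V → i' j = i j),
        M i' = (u k (i k) * f m i) * ∏ m' ∈ Finset.univ.erase m, f m' i' := by
      intro i' hi'
      simp only [mem_filter, mem_univ, true_and] at hi'
      have hik : i' k = i k := hi' k ((hset k).2 (Or.inl rfl))
      rw [hMfac i', ← Finset.mul_prod_erase Finset.univ (fun m' => f m' i') (mem_univ m),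
        hik, hdep m i' i (fun j hj => hi' j ((hset j).2 hj))]
      ring
    rw [Finset.sum_congr rfl hval, ← Finset.mul_sum,
      constrained_sum_prod_aux i V k hVk hVdisj f hdep (Finset.univ.erase m)]
  -- assemble everything
  rw [hPk, Finset.prod_congr rfl (fun m _ => hQ m), hMfac i]
  have hPpos : 0 < ∏ m, σ m := Finset.prod_pos (fun m _ => hσpos m)
  have herase : ∀ m : Fin d, ∏ m' ∈ Finset.univ.erase m, σ m' = (∏ m', σ m') / σ m := by
    intro m
    rw [eq_div_iff (ne_of_gt (hσpos m)), mul_comm, Finset.mul_prod_erase _ _ (mem_univ m)]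
  simp only [herase]
  conv_rhs => rw [Finset.prod_mul_distrib, Finset.prod_mul_distrib, Finset.prod_div_distrib,
    Finset.prod_const, Finset.prod_const, Finset.card_univ, Fintype.card_fin]
  have hd1 : d - 1 + 1 = d := Nat.succ_pred_eq_of_pos hd
  have hup : u k (i k) * u k (i k) ^ (d - 1) = u k (i k) ^ d := by
    rw [← pow_succ', hd1]
  rw [mul_pow, pow_sub₀ (∏ m, σ m) (ne_of_gt hPpos) hd, pow_one, div_eq_mul_inv,
    ← hup]
  ring
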